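/- For the standard complexes C(a_i,b_i): if the parameter sequence (a_1,b_2,...,a_{2m-1},b_{2m}) is ≤ the sequence (a_1',b_2',...,a_{2n-1}',b_{2n}') in the lexicographic order induced by the modified order on Z (−1 <! −2 <! ⋯ <! 0 <! ⋯ <! 2 <! 1, shorter sequences padded by zeros), then there exists a local map from C(a_i,b_i) to C(a_i',b_i'). -/

import Mathlib

open Polynomial

abbrev F2 : Type := ZMod 2
abbrev R : Type := Polynomial F2

noncomputable section

namespace AI

/-- The variable `U`. -/
def Uu : R := Polynomial.X

/-- The free `R`-module of rank `n`. -/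
abbrev V (n : ℕ) : Type := Fin n → R

/-- The `i`-th standard basis vector. -/
def e {n : ℕ} (i : Fin n) : V n := fun j => if j = i then 1 else 0

/-- The `i`-th standard basis vector over `F2`. -/
def e2 {n : ℕ} (i : Fin n) : Fin n → F2 := fun j => if j = i then 1 else 0

/-- `x` lies in the image of multiplication by `U`. -/
def modU {n : ℕ} (x : V n) : Prop := ∀ j, (x j).coeff 0 = 0

/-- `x` is homogeneous of degree `c` with respect to the generator gradings `gr`
(where `deg U = -2`). -/
def IsHomog {n : ℕ} (gr : Fin n → ℤ) (c : ℤ) (x : V n) : Prop :=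
  ∀ (j : Fin n) (m : ℕ), (x j).coeff m ≠ 0 → gr j - 2 * (m : ℤ) = c

/-- `f` is a graded `R`-linear map of degree `dg`. -/
def GradedMap {m n : ℕ} (gr₁ : Fin m → ℤ) (gr₂ : Fin n → ℤ) (dg : ℤ)
    (f : V m →ₗ[R] V n) : Prop :=
  ∀ i : Fin m, IsHomog gr₂ (gr₁ i + dg) (f (e i))

/-- The raw data of a free finitely generated `ℤ`-graded complex over `R = F[U]`. -/
structure PreCplx where
  n : ℕ
  gr : Fin n → ℤ
  d : V n →ₗ[R] V n

def IsCycle (C : PreCplx) (x : V C.n) : Prop := C.d x = 0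

def IsBdry (C : PreCplx) (x : V C.n) : Prop := ∃ y, C.d y = x

/-- `x` is a cycle representing a `U`-nontorsion homology class. -/
def NontorsionClass (C : PreCplx) (x : V C.n) : Prop :=
  IsCycle C x ∧ ∀ k : ℕ, ¬ IsBdry C ((Uu ^ k) • x)

/-- `U⁻¹H_*(C) ≅ F[U, U⁻¹]`, generated by a degree-zero cycle (normalization
convention: the maximal degree of a `U`-nontorsion cycle class is zero, so the
localized homology is supported in even degrees). -/
def HtowerCond (C : PreCplx) : Prop :=
  ∃ x : V C.n, IsCycle C x ∧ IsHomog C.gr 0 x ∧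
    (∀ k : ℕ, ¬ IsBdry C ((Uu ^ k) • x)) ∧
    (∀ y : V C.n, IsCycle C y →
      ∃ (k : ℕ) (p : R) (z : V C.n), (Uu ^ k) • y = p • x + C.d z)

/-- `C` is a genuine graded chain complex. -/
def IsCplx (C : PreCplx) : Prop :=
  GradedMap C.gr C.gr (-1) C.d ∧ C.d ∘ₗ C.d = 0

/-- `f` and `g` are homotopic mod `U`. -/
def HomotopicModU (C₁ C₂ : PreCplx) (f g : V C₁.n →ₗ[R] V C₂.n) : Prop :=
  ∃ H : V C₁.n →ₗ[R] V C₂.n, GradedMap C₁.gr C₂.gr 1 H ∧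
    ∀ x, modU ((f + g + H ∘ₗ C₁.d + C₂.d ∘ₗ H) x)

/-- The raw data of an almost ι-complex. -/
structure PreAI extends PreCplx where
  ι : V n →ₗ[R] V n

/-- `ω = 1 + ι`. -/
def omega (C : PreAI) : V C.n →ₗ[R] V C.n := LinearMap.id + C.ι

/-- `C` is an almost ι-complex. -/
def IsAICplx (C : PreAI) : Prop :=
  IsCplx C.toPreCplx ∧
  GradedMap C.gr C.gr 0 C.ι ∧
  (∀ x, modU ((C.ι ∘ₗ C.d + C.d ∘ₗ C.ι) x)) ∧
  HomotopicModU C.toPreCplx C.toPreCplx (C.ι ∘ₗ C.ι) LinearMap.id ∧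
  HtowerCond C.toPreCplx

/-- `C` is a genuine ι-complex: `ι` is an honest chain map whose square is
genuinely chain homotopic to the identity. -/
def IsIotaCplx (C : PreAI) : Prop :=
  IsCplx C.toPreCplx ∧
  GradedMap C.gr C.gr 0 C.ι ∧
  C.ι ∘ₗ C.d = C.d ∘ₗ C.ι ∧
  (∃ H : V C.n →ₗ[R] V C.n, GradedMap C.gr C.gr 1 H ∧
    C.ι ∘ₗ C.ι + LinearMap.id = H ∘ₗ C.d + C.d ∘ₗ H) ∧
  HtowerCond C.toPreCplx

/-- A reduced complex: the differential vanishes mod `U`. -/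
def Reduced (C : PreAI) : Prop := ∀ x, modU (C.d x)

/-- `f` is an almost ι-morphism. -/
def isAIMorphism (C₁ C₂ : PreAI) (f : V C₁.n →ₗ[R] V C₂.n) : Prop :=
  GradedMap C₁.gr C₂.gr 0 f ∧
  f ∘ₗ C₁.d = C₂.d ∘ₗ f ∧
  HomotopicModU C₁.toPreCplx C₂.toPreCplx (f ∘ₗ C₁.ι) (C₂.ι ∘ₗ f)

/-- A local map: an almost ι-morphism inducing an isomorphism on `U`-localized
homology (equivalently, with the normalization conventions in force, preserving
`U`-nontorsion cycle classes). -/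
def isLocalMap (C₁ C₂ : PreAI) (f : V C₁.n →ₗ[R] V C₂.n) : Prop :=
  isAIMorphism C₁ C₂ f ∧
  ∀ x, NontorsionClass C₁.toPreCplx x → NontorsionClass C₂.toPreCplx (f x)

/-- Local equivalence of almost ι-complexes. -/
def LocallyEquiv (C₁ C₂ : PreAI) : Prop :=
  (∃ f, isLocalMap C₁ C₂ f) ∧ (∃ g, isLocalMap C₂ C₁ g)

/-- The tensor product (over `R`) of linear maps between free modules,
in the bases indexed by `finProdFinEquiv`. -/
def tmap {m n m' n' : ℕ} (f : V m →ₗ[R] V m') (g : V n →ₗ[R] V n') :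
    V (m * n) →ₗ[R] V (m' * n') where
  toFun x := fun p => ∑ q : Fin (m * n),
    x q * f (e (finProdFinEquiv.symm q).1) (finProdFinEquiv.symm p).1
        * g (e (finProdFinEquiv.symm q).2) (finProdFinEquiv.symm p).2
  map_add' x y := by
    funext p
    simp [Pi.add_apply, add_mul, Finset.sum_add_distrib]
  map_smul' c x := by
    funext p
    simp only [RingHom.id_apply, Pi.smul_apply, smul_eq_mul, Finset.mul_sum]
    exact Finset.sum_congr rfl fun q _ => by ring

/-- The tensor product of complexes. -/
def tensorPre (C₁ C₂ : PreCplx) : PreCplx where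
  n := C₁.n * C₂.n
  gr := fun q => C₁.gr (finProdFinEquiv.symm q).1 + C₂.gr (finProdFinEquiv.symm q).2
  d := tmap C₁.d LinearMap.id + tmap LinearMap.id C₂.d

/-- The tensor product of almost ι-complexes. -/
def tensorAI (C₁ C₂ : PreAI) : PreAI where
  toPreCplx := tensorPre C₁.toPreCplx C₂.toPreCplx
  ι := tmap C₁.ι C₂.ι

/-- The transpose of a square matrix map (the dual map in the dual basis). -/
def tr {n : ℕ} (f : V n →ₗ[R] V n) : V n →ₗ[R] V n where
  toFun x := fun j => ∑ i : Fin n, x i * f (e j) i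
  map_add' x y := by
    funext j
    simp [Pi.add_apply, add_mul, Finset.sum_add_distrib]
  map_smul' c x := by
    funext j
    simp only [RingHom.id_apply, Pi.smul_apply, smul_eq_mul, Finset.mul_sum]
    exact Finset.sum_congr rfl fun i _ => by ring

/-- The dual complex. -/
def dualPre (C : PreCplx) : PreCplx where
  n := C.n
  gr := fun i => -C.gr i
  d := tr C.d

/-- The dual almost ι-complex. -/
def dualAI (C : PreAI) : PreAI where
  toPreCplx := dualPre C.toPreCplx
  ι := tr C.ι

/-- The trivial complex `C(0) = (F[U], ∂ = 0, ι = id)`. -/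
def cZero : PreAI := ⟨⟨1, fun _ => 0, 0⟩, LinearMap.id⟩

/-- The contraction map `C ⊗ C^∨ → F[U]`, `x ⊗ y ↦ y(x)`. -/
def contr (n : ℕ) : V (n * n) →ₗ[R] V 1 where
  toFun x := fun _ => ∑ i : Fin n, x (finProdFinEquiv (i, i))
  map_add' x y := by funext j; simp [Pi.add_apply, Finset.sum_add_distrib]
  map_smul' c x := by
    funext j
    simp only [RingHom.id_apply, Pi.smul_apply, smul_eq_mul, Finset.mul_sum]

/-! ### Standard and augmented complexes -/

/-- The `i`-th symbol (0-indexed) of the parameter sequence, padded by zeros. -/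
def seqAt (M : List ℤ) (i : ℕ) : ℤ := M.getD i 0

/-- Grading step of a `b`-arrow. -/
def bstep (b : ℤ) : ℤ := (if 0 < b then 1 else -1) - 2 * b

/-- Grading of the generator `T_i` of the standard/augmented complex. -/
def stdGr (M : List ℤ) (i : ℕ) : ℤ :=
  ∑ s ∈ Finset.range i, if s % 2 = 1 then bstep (seqAt M s) else 0

/-- A linear endomorphism of `V n` given by a matrix of coefficients. -/
def ofMatrix {n : ℕ} (c : ℕ → ℕ → R) : V n →ₗ[R] V n where
  toFun x := fun j => ∑ i : Fin n, x i * c i j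
  map_add' x y := by
    funext j
    simp [Pi.add_apply, add_mul, Finset.sum_add_distrib]
  map_smul' r x := by
    funext j
    simp only [RingHom.id_apply, Pi.smul_apply, smul_eq_mul, Finset.mul_sum]
    exact Finset.sum_congr rfl fun i _ => by ring

/-- Matrix of the differential of the standard/augmented complex: the `b`-symbol
at (0-indexed) odd position `s` of `M` relates `T_s` and `T_{s+1}`. -/
def dCoef (M : List ℤ) (i j : ℕ) : R :=
  if i % 2 = 1 ∧ seqAt M i < 0 ∧ j = i + 1 then Uu ^ (seqAt M i).natAbs
  else if i % 2 = 0 ∧ 0 < i ∧ 0 < seqAt M (i - 1) ∧ j + 1 = i then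
    Uu ^ (seqAt M (i - 1)).natAbs
  else 0

/-- Matrix of `ω = 1 + ι` on the standard/augmented complex: the `a`-symbol at
(0-indexed) even position `s` of `M` relates `T_s` and `T_{s+1}`. -/
def wCoef (M : List ℤ) (i j : ℕ) : R :=
  if i % 2 = 0 ∧ seqAt M i = -1 ∧ j = i + 1 then 1
  else if i % 2 = 1 ∧ seqAt M (i - 1) = 1 ∧ j + 1 = i then 1
  else 0

/-- Matrix of `ι = 1 + ω` (char 2). -/
def iCoef (M : List ℤ) (i j : ℕ) : R :=
  (if i = j then 1 else 0) + wCoef M i j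

/-- The standard (even length) or augmented (odd length) complex on generators
`T_0, …, T_{M.length}` determined by the symbol sequence `M`. -/
def symCplx (M : List ℤ) : PreAI :=
  ⟨⟨M.length + 1, fun i => stdGr M i, ofMatrix (dCoef M)⟩, ofMatrix (iCoef M)⟩

/-- Validity of a standard parameter sequence. -/
def StdParams (M : List ℤ) : Prop :=
  M.length % 2 = 0 ∧
  ∀ i < M.length, if i % 2 = 0 then seqAt M i = 1 ∨ seqAt M i = -1 else seqAt M i ≠ 0

/-- Validity of an augmented parameter sequence. -/
def AugParams (M : List ℤ) : Prop :=
  M.length % 2 = 1 ∧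
  ∀ i < M.length, if i % 2 = 0 then seqAt M i = 1 ∨ seqAt M i = -1 else seqAt M i ≠ 0

/-- The modified order `<!` on `ℤ`: `−1 <! −2 <! ⋯ <! 0 <! ⋯ <! 2 <! 1`. -/
def ltB (x y : ℤ) : Prop :=
  (x < 0 ∧ 0 ≤ y) ∨ (x ≤ 0 ∧ 0 < y) ∨ (x < 0 ∧ y < 0 ∧ y < x) ∨ (0 < x ∧ 0 < y ∧ y < x)

def leB (x y : ℤ) : Prop := ltB x y ∨ x = y

/-- Strict lexicographic order on (zero-padded) parameter sequences. -/
def lexLt (M M' : List ℤ) : Prop :=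
  ∃ k : ℕ, (∀ i < k, seqAt M i = seqAt M' i) ∧ ltB (seqAt M k) (seqAt M' k)

def lexLe (M M' : List ℤ) : Prop := lexLt M M' ∨ ∀ i, seqAt M i = seqAt M' i

/-- A short map from the standard (even `M.length`) or augmented (odd `M.length`)
complex determined by `M` to `A`: the `ω`-condition (standard case) resp. the
`∂`-condition (augmented case) is waived on the final generator. -/
def isShortMap (M : List ℤ) (A : PreAI) (f : V (M.length + 1) →ₗ[R] V A.n) : Prop :=
  GradedMap (symCplx M).gr A.gr 0 f ∧
  (∀ i : Fin (M.length + 1), ((i : ℕ) < M.length ∨ M.length % 2 = 0) →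
    A.d (f (e i)) = f ((symCplx M).d (e i))) ∧
  (∀ i : Fin (M.length + 1), ((i : ℕ) < M.length ∨ M.length % 2 = 1) →
    modU ((omega A) (f (e i)) + f ((omega (symCplx M)) (e i))))

/-- A local short map: `T_0` goes to a `U`-nontorsion cycle class. -/
def isLocalShortMap (M : List ℤ) (A : PreAI) (f : V (M.length + 1) →ₗ[R] V A.n) : Prop :=
  isShortMap M A f ∧ NontorsionClass A.toPreCplx (f (e ⟨0, Nat.succ_pos _⟩))

/-- The sequence of invariants `s_i(A)` (1-indexed in the paper; 0-indexed here):
`s k` is the `≤!`-maximum of the `(k+1)`-st symbols among standard complexes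
locally mapping to `A` whose first `k` symbols are `s 0, …, s (k-1)`. -/
def IsInvariantSeq (A : PreAI) (s : ℕ → ℤ) : Prop :=
  ∀ k : ℕ,
    (∃ M : List ℤ, StdParams M ∧ (∃ f, isLocalMap (symCplx M) A f) ∧
      ∀ i ≤ k, seqAt M i = s i) ∧
    (∀ M : List ℤ, StdParams M → (∃ f, isLocalMap (symCplx M) A f) →
      (∀ i < k, seqAt M i = s i) → leB (seqAt M k) (s k))

/-- Reduction mod `U` of a linear map, as an `F₂`-linear map. -/
def mapHat {m n : ℕ} (f : V m →ₗ[R] V n) : (Fin m → F2) →ₗ[F2] (Fin n → F2) where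
  toFun x := fun j => ∑ i : Fin m, x i * (f (e i) j).coeff 0
  map_add' x y := by
    funext j
    simp [Pi.add_apply, add_mul, Finset.sum_add_distrib]
  map_smul' c x := by
    funext j
    simp only [RingHom.id_apply, Pi.smul_apply, smul_eq_mul, Finset.mul_sum]
    exact Finset.sum_congr rfl fun i _ => by ring

/-- The induced action `ω̂` on `C/U`. -/
def wHat (C : PreAI) : (Fin C.n → F2) →ₗ[F2] (Fin C.n → F2) := mapHat (omega C)

end AI

namespace AI


/-! ### Auxiliary development for the proof -/

section Basics

variable {m n : ℕ}

lemma e_apply (i j : Fin n) : e i j = if j = i then 1 else 0 := rfl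

lemma ofMatrix_apply (c : ℕ → ℕ → R) (x : V n) (j : Fin n) :
    ofMatrix c x j = ∑ i : Fin n, x i * c i j := rfl

lemma ofMatrix_e (c : ℕ → ℕ → R) (i j : Fin n) : ofMatrix c (e i) j = c i j := by
  rw [ofMatrix_apply]
  simp [e, ite_mul, one_mul, zero_mul, Finset.sum_ite_eq']

lemma rep (x : V n) : x = ∑ i : Fin n, x i • e i := by
  funext j
  simp only [Finset.sum_apply, Pi.smul_apply, e, smul_eq_mul, mul_ite, mul_one, mul_zero]
  rw [Finset.sum_ite_eq]
  simp

lemma lmap_ext {f g : V m →ₗ[R] V n} (h : ∀ i, f (e i) = g (e i)) : f = g := by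
  apply LinearMap.ext; intro x
  rw [rep x, map_sum, map_sum]
  simp only [map_smul, h]

lemma modU_basis (g : V m →ₗ[R] V n) (h : ∀ i, modU (g (e i))) (x : V m) : modU (g x) := by
  intro j
  rw [rep x, map_sum]
  simp only [Finset.sum_apply, map_smul, Pi.smul_apply, smul_eq_mul]
  rw [Polynomial.finset_sum_coeff]
  apply Finset.sum_eq_zero; intro i _
  rw [Polynomial.mul_coeff_zero, h i j, mul_zero]

lemma sum_pick {n : ℕ} (g : ℕ → R) (jv : ℕ) :
    (∑ i : Fin n, if (i : ℕ) = jv then g i else 0) = if jv < n then g jv else 0 := by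
  by_cases h : jv < n
  · rw [if_pos h, Finset.sum_eq_single (⟨jv, h⟩ : Fin n)]
    · simp
    · intro b _ hb; rw [if_neg]; exact fun hc => hb (Fin.ext hc)
    · intro hmem; exact absurd (Finset.mem_univ _) hmem
  · rw [if_neg h]; apply Finset.sum_eq_zero; intro i _; rw [if_neg]
    exact fun hc => h (hc ▸ i.isLt)

lemma sum_pick' {n : ℕ} (g : ℕ → R) (jv : ℕ) :
    (∑ i : Fin n, if jv = (i : ℕ) then g i else 0) = if jv < n then g jv else 0 := by
  rw [← sum_pick g jv]
  exact Finset.sum_congr rfl fun i _ => if_congr eq_comm rfl rfl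

/-- rectangular matrix map -/
def rmap {m n : ℕ} (c : ℕ → ℕ → R) : V m →ₗ[R] V n where
  toFun x := fun j => ∑ i : Fin m, x i * c i j
  map_add' x y := by
    funext j
    simp [Pi.add_apply, add_mul, Finset.sum_add_distrib]
  map_smul' r x := by
    funext j
    simp only [RingHom.id_apply, Pi.smul_apply, smul_eq_mul, Finset.mul_sum]
    exact Finset.sum_congr rfl fun i _ => by ring

lemma rmap_apply (c : ℕ → ℕ → R) (x : V m) (j : Fin n) :
    rmap c x j = ∑ i : Fin m, x i * c i j := rfl

lemma rmap_e (c : ℕ → ℕ → R) (i : Fin m) (j : Fin n) : rmap c (e i) j = c i j := by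
  rw [rmap_apply]
  simp [e, ite_mul, one_mul, zero_mul, Finset.sum_ite_eq']

lemma R_add_self (x : R) : x + x = 0 := by
  have h2 : (2 : R) = 0 := by
    have : ((2 : ℕ) : R) = ((0 : ℕ) : R) := by
      rw [← Polynomial.C_eq_natCast, ← Polynomial.C_eq_natCast]
      norm_num
      rfl
    simpa using this
  rw [← two_mul, h2, zero_mul]

lemma F2_add_self (x : F2) : x + x = 0 := by
  rw [← two_mul, show (2 : F2) = 0 from rfl, zero_mul]

lemma seqAt_zero {M : List ℤ} {s : ℕ} (h : M.length ≤ s) : seqAt M s = 0 :=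
  List.getD_eq_default _ _ h

lemma seqAt_support {M : List ℤ} {s : ℕ} (h : seqAt M s ≠ 0) : s < M.length := by
  by_contra hc
  exact h (seqAt_zero (by omega))

end Basics
/-- The `U`-power placed on generator `k+1` by the diagonal local map. -/
def wP (M M' : List ℤ) (k : ℕ) : R :=
  if k % 2 = 1 then
    if seqAt M k < 0 ∧ seqAt M' k < 0 then
      Uu ^ ((seqAt M' k).natAbs - (seqAt M k).natAbs)
    else if 0 < seqAt M k ∧ 0 < seqAt M' k then
      Uu ^ (seqAt M k - seqAt M' k).toNat
    else 0
  else 0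

/-- The diagonal entries of the local map. -/
def uD (M M' : List ℤ) (k : ℕ) (i : ℕ) : R :=
  if i ≤ k then 1 else if i = k + 1 then wP M M' k else 0

/-- The hypotheses needed for the diagonal map construction. -/
structure Hyp (M M' : List ℤ) (k : ℕ) : Prop where
  pre : ∀ i < k, seqAt M i = seqAt M' i
  p2 : seqAt M' k ≠ -1
  p3 : seqAt M k ≠ 1
  p4a : 0 < seqAt M k → 0 < seqAt M' k
  p4b : seqAt M k = 0 → 0 ≤ seqAt M' k
  p5 : seqAt M k < 0 → seqAt M' k < 0 → seqAt M' k < seqAt M k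
  p6 : 0 < seqAt M k → 0 < seqAt M' k → seqAt M' k < seqAt M k

section CoefLemmas

variable (M : List ℤ)

lemma dCoef_of_not {i j : ℕ} (h1 : ¬(i % 2 = 1 ∧ seqAt M i < 0 ∧ j = i + 1))
    (h2 : ¬(i % 2 = 0 ∧ 0 < i ∧ 0 < seqAt M (i - 1) ∧ j + 1 = i)) : dCoef M i j = 0 := by
  unfold dCoef; rw [if_neg h1, if_neg h2]

lemma dCoef_b1 {i j : ℕ} (h : i % 2 = 1 ∧ seqAt M i < 0 ∧ j = i + 1) :
    dCoef M i j = Uu ^ (seqAt M i).natAbs := by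
  unfold dCoef; rw [if_pos h]

lemma dCoef_b2 {i j : ℕ} (h : i % 2 = 0 ∧ 0 < i ∧ 0 < seqAt M (i - 1) ∧ j + 1 = i) :
    dCoef M i j = Uu ^ (seqAt M (i - 1)).natAbs := by
  unfold dCoef; rw [if_neg (by omega), if_pos h]

lemma wCoef_of_not {i j : ℕ} (h1 : ¬(i % 2 = 0 ∧ seqAt M i = -1 ∧ j = i + 1))
    (h2 : ¬(i % 2 = 1 ∧ seqAt M (i - 1) = 1 ∧ j + 1 = i)) : wCoef M i j = 0 := by
  unfold wCoef; rw [if_neg h1, if_neg h2]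

lemma wCoef_b1 {i j : ℕ} (h : i % 2 = 0 ∧ seqAt M i = -1 ∧ j = i + 1) :
    wCoef M i j = 1 := by
  unfold wCoef; rw [if_pos h]

lemma wCoef_b2 {i j : ℕ} (h : i % 2 = 1 ∧ seqAt M (i - 1) = 1 ∧ j + 1 = i) :
    wCoef M i j = 1 := by
  unfold wCoef; rw [if_neg (by omega), if_pos h]

lemma wCoef_diag (i : ℕ) : wCoef M i i = 0 :=
  wCoef_of_not M (by omega) (by omega)

lemma dCoef_rowbig {i j : ℕ} (hi : M.length < i) : dCoef M i j = 0 := by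
  apply dCoef_of_not
  · intro hc; rw [seqAt_zero (by omega)] at hc; omega
  · intro hc; rw [seqAt_zero (by omega)] at hc; omega

lemma dCoef_colbig {i j : ℕ} (hi : i ≤ M.length) (hj : M.length < j) : dCoef M i j = 0 := by
  apply dCoef_of_not
  · intro hc
    have := seqAt_support (show seqAt M i ≠ 0 by omega)
    omega
  · intro hc; omega

lemma wCoef_rowbig {i j : ℕ} (hi : M.length < i) : wCoef M i j = 0 := by
  apply wCoef_of_not
  · intro hc; rw [seqAt_zero (by omega)] at hc; omega
  · intro hc; rw [seqAt_zero (by omega)] at hc; omega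

lemma wCoef_colbig {i j : ℕ} (hi : i ≤ M.length) (hj : M.length < j) : wCoef M i j = 0 := by
  apply wCoef_of_not
  · intro hc
    have := seqAt_support (show seqAt M i ≠ 0 by omega)
    omega
  · intro hc; omega

lemma dCoef_col0 (i : ℕ) : dCoef M i 0 = 0 :=
  dCoef_of_not M (by omega) (by omega)

end CoefLemmas

section WPLemmas

variable {M M' : List ℤ} {k : ℕ}

lemma wP_coeff0 (h : Hyp M M' k) : (wP M M' k).coeff 0 = 0 := by
  unfold wP
  split_ifs with h1 h2 h3
  · have := h.p5 h2.1 h2.2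
    rw [Uu, Polynomial.coeff_X_pow, if_neg (by omega)]
  · have := h.p6 h3.1 h3.2
    rw [Uu, Polynomial.coeff_X_pow, if_neg (by omega)]
  · simp
  · simp

lemma uD_one {i : ℕ} (hi : i ≤ k) : uD M M' k i = 1 := by
  unfold uD; rw [if_pos hi]

lemma uD_w : uD M M' k (k + 1) = wP M M' k := by
  unfold uD; rw [if_neg (by omega), if_pos rfl]

lemma uD_zero {i : ℕ} (hi : k + 1 < i) : uD M M' k i = 0 := by
  unfold uD; rw [if_neg (by omega), if_neg (by omega)]

lemma uD_coeff0 (h : Hyp M M' k) {i : ℕ} (hi : k < i) : (uD M M' k i).coeff 0 = 0 := by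
  unfold uD
  rw [if_neg (by omega)]
  split_ifs with h1
  · exact wP_coeff0 h
  · simp

lemma wP_even (hk : k % 2 = 0) : wP M M' k = 0 := by
  unfold wP; rw [if_neg (by omega)]

end WPLemmas
section Key1

variable {M M' : List ℤ} {k : ℕ}

lemma key1 (h : Hyp M M' k) (i j : ℕ) :
    uD M M' k i * dCoef M' i j = dCoef M i j * uD M M' k j := by
  rcases lt_trichotomy i k with hik | hik | hik
  · -- i < k
    have h1 : seqAt M i = seqAt M' i := h.pre i hik
    have h2 : seqAt M (i - 1) = seqAt M' (i - 1) := h.pre (i - 1) (by omega)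
    have hd : dCoef M' i j = dCoef M i j := by
      unfold dCoef; rw [← h1, ← h2]
    rw [hd, uD_one (by omega), one_mul]
    by_cases hj : j ≤ k
    · rw [uD_one hj, mul_one]
    · rw [dCoef_of_not M (fun hc => hj (by omega)) (fun hc => hj (by omega)), zero_mul]
  · -- i = k
    have hik2 : k = i := hik.symm
    subst hik2
    rw [uD_one le_rfl, one_mul]
    by_cases hk2 : k % 2 = 1
    · -- k odd
      by_cases hj : j = k + 1
      · subst hj
        rw [uD_w]
        rcases lt_trichotomy (seqAt M k) 0 with hb | hb | hb
        · rcases lt_trichotomy (seqAt M' k) 0 with hb' | hb' | hb'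
          · -- both negative
            have h5 := h.p5 hb hb'
            rw [dCoef_b1 M' ⟨hk2, hb', rfl⟩, dCoef_b1 M ⟨hk2, hb, rfl⟩,
              show wP M M' k = Uu ^ ((seqAt M' k).natAbs - (seqAt M k).natAbs) by
                unfold wP; rw [if_pos hk2, if_pos ⟨hb, hb'⟩],
              ← pow_add]
            congr 1
            omega
          · rw [dCoef_of_not M' (by omega) (by omega),
              show wP M M' k = 0 by
                unfold wP; rw [if_pos hk2, if_neg (by omega), if_neg (by omega)],
              mul_zero]
          · rw [dCoef_of_not M' (by omega) (by omega),
              show wP M M' k = 0 by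
                unfold wP; rw [if_pos hk2, if_neg (by omega), if_neg (by omega)],
              mul_zero]
        · have hb' := h.p4b hb
          rw [dCoef_of_not M' (by omega) (by omega),
            dCoef_of_not M (by omega) (by omega), zero_mul]
        · have hb' := h.p4a hb
          rw [dCoef_of_not M' (by omega) (by omega),
            dCoef_of_not M (by omega) (by omega), zero_mul]
      · rw [dCoef_of_not M' (by omega) (by omega),
          dCoef_of_not M (by omega) (by omega), zero_mul]
    · -- k even
      have hd : dCoef M' k j = dCoef M k j := by
        by_cases hc : k % 2 = 0 ∧ 0 < k ∧ 0 < seqAt M (k - 1) ∧ j + 1 = k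
        · have hpe : seqAt M (k - 1) = seqAt M' (k - 1) := h.pre _ (by omega)
          rw [dCoef_b2 M' ⟨hc.1, hc.2.1, by rw [← hpe]; exact hc.2.2.1, hc.2.2.2⟩,
            dCoef_b2 M hc, hpe]
        · rw [dCoef_of_not M' (by omega)
            (fun hc' => hc ⟨hc'.1, hc'.2.1, by
              rw [h.pre (k - 1) (by omega)]; exact hc'.2.2.1, hc'.2.2.2⟩),
            dCoef_of_not M (by omega) hc]
      rw [hd]
      by_cases hj : j ≤ k
      · rw [uD_one hj, mul_one]
      · rw [dCoef_of_not M (by omega) (fun hc => hj (by omega)), zero_mul]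
  · -- k < i
    by_cases hik1 : i = k + 1
    · subst hik1
      rw [uD_w]
      by_cases hk2 : k % 2 = 1
      · -- i = k+1 even
        by_cases hj : j = k
        · have hj2 : k = j := hj.symm
          subst hj2
          rw [uD_one le_rfl, mul_one]
          rcases lt_trichotomy (seqAt M k) 0 with hb | hb | hb
          · rw [dCoef_of_not M (by omega) (by simp only [Nat.add_sub_cancel]; omega)]
            rcases lt_trichotomy (seqAt M' k) 0 with hb' | hb' | hb'
            · rw [dCoef_of_not M' (by omega) (by simp only [Nat.add_sub_cancel]; omega),
                mul_zero]
            · rw [dCoef_of_not M' (by omega) (by simp only [Nat.add_sub_cancel]; omega),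
                mul_zero]
            · rw [show wP M M' k = 0 by
                unfold wP; rw [if_pos hk2, if_neg (by omega), if_neg (by omega)], zero_mul]
          · rw [dCoef_of_not M (by omega) (by simp only [Nat.add_sub_cancel]; omega),
              show wP M M' k = 0 by
                unfold wP; rw [if_pos hk2, if_neg (by omega), if_neg (by omega)],
              zero_mul]
          · have hb' := h.p4a hb
            have h6 := h.p6 hb hb'
            rw [dCoef_b2 M' ⟨by omega, by omega, by
                have : (k + 1 : ℕ) - 1 = k := by omega
                rw [this]; exact hb', rfl⟩,
              dCoef_b2 M ⟨by omega, by omega, by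
                have : (k + 1 : ℕ) - 1 = k := by omega
                rw [this]; exact hb, rfl⟩,
              show wP M M' k = Uu ^ (seqAt M k - seqAt M' k).toNat by
                unfold wP; rw [if_pos hk2, if_neg (by omega), if_pos ⟨hb, hb'⟩],
              show (k + 1 : ℕ) - 1 = k by omega, ← pow_add]
            congr 1
            omega
        · rw [dCoef_of_not M' (by omega) (by omega), mul_zero,
            dCoef_of_not M (by omega) (by omega), zero_mul]
      · rw [wP_even (by omega), zero_mul]
        by_cases hj : j = k + 2
        · subst hj
          rw [uD_zero (by omega), mul_zero]
        · rw [dCoef_of_not M (fun hc => hj (by omega)) (by omega), zero_mul]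
    · -- i > k + 1
      rw [uD_zero (by omega), zero_mul]
      by_cases hj : j ≤ k
      · rw [dCoef_of_not M (by omega) (by omega), zero_mul]
      · by_cases hj1 : j = k + 1
        · subst hj1
          rw [uD_w]
          by_cases hk2 : k % 2 = 1
          · rw [dCoef_of_not M (by omega) (by omega), zero_mul]
          · rw [wP_even (by omega), mul_zero]
        · rw [uD_zero (by omega), mul_zero]
end Key1
section Key2

variable {M M' : List ℤ} {k : ℕ}

lemma key2 (h : Hyp M M' k) (i j : ℕ) :
    (uD M M' k i * wCoef M' i j).coeff 0 + (wCoef M i j * uD M M' k j).coeff 0 = 0 := by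
  by_cases hik : i ≤ k
  · rw [uD_one hik, one_mul]
    by_cases hjk : j ≤ k
    · rw [uD_one hjk, mul_one]
      have heq : wCoef M' i j = wCoef M i j := by
        by_cases hc1 : i % 2 = 0 ∧ seqAt M i = -1 ∧ j = i + 1
        · rw [wCoef_b1 M ⟨hc1.1, hc1.2.1, hc1.2.2⟩,
            wCoef_b1 M' ⟨hc1.1, by rw [← h.pre i (by omega)]; exact hc1.2.1, hc1.2.2⟩]
        · by_cases hc2 : i % 2 = 1 ∧ seqAt M (i - 1) = 1 ∧ j + 1 = i
          · rw [wCoef_b2 M hc2,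
              wCoef_b2 M' ⟨hc2.1, by rw [← h.pre (i - 1) (by omega)]; exact hc2.2.1,
                hc2.2.2⟩]
          · rw [wCoef_of_not M hc1 hc2, wCoef_of_not M' ?_ ?_]
            · intro hc
              exact hc1 ⟨hc.1, by rw [h.pre i (by omega)]; exact hc.2.1, hc.2.2⟩
            · intro hc
              exact hc2 ⟨hc.1, by rw [h.pre (i - 1) (by omega)]; exact hc.2.1, hc.2.2⟩
      rw [heq]
      exact F2_add_self _
    · -- j > k
      have h2 : (wCoef M i j * uD M M' k j).coeff 0 = 0 := by
        rw [Polynomial.mul_coeff_zero, uD_coeff0 h (by omega), mul_zero]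
      have h1 : wCoef M' i j = 0 := by
        apply wCoef_of_not
        · intro hc
          have hik' : i = k := by omega
          exact h.p2 (hik' ▸ hc.2.1)
        · intro hc; omega
      rw [h1, h2, Polynomial.coeff_zero, add_zero]
  · -- i > k
    have h1 : (uD M M' k i * wCoef M' i j).coeff 0 = 0 := by
      rw [Polynomial.mul_coeff_zero, uD_coeff0 h (by omega), zero_mul]
    rw [h1, zero_add]
    by_cases hjk : j ≤ k
    · have h2 : wCoef M i j = 0 := by
        apply wCoef_of_not
        · intro hc; omega
        · intro hc
          have hik' : i = k + 1 := by omega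
          rw [hik'] at hc
          simp only [Nat.add_sub_cancel] at hc
          exact h.p3 hc.2.1
      rw [h2, zero_mul, Polynomial.coeff_zero]
    · rw [Polynomial.mul_coeff_zero, uD_coeff0 h (by omega), mul_zero]

end Key2

section Grading

variable {M M' : List ℤ} {k : ℕ}

lemma stdGr_congr (h : Hyp M M' k) {i : ℕ} (hi : i ≤ k) : stdGr M i = stdGr M' i := by
  unfold stdGr
  refine Finset.sum_congr rfl fun s hs => ?_
  rw [Finset.mem_range] at hs
  rw [h.pre s (by omega)]

lemma stdGr_succ (M : List ℤ) (i : ℕ) :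
    stdGr M (i + 1) = stdGr M i + if i % 2 = 1 then bstep (seqAt M i) else 0 := by
  unfold stdGr
  rw [Finset.sum_range_succ]

lemma bstep_neg {b : ℤ} (hb : b < 0) : bstep b = -1 - 2 * b := by
  unfold bstep; rw [if_neg (by omega)]

lemma bstep_pos {b : ℤ} (hb : 0 < b) : bstep b = 1 - 2 * b := by
  unfold bstep; rw [if_pos hb]

end Grading
/-- The diagonal local map from `symCplx M` to `symCplx M'`. -/
def fdiag (M M' : List ℤ) (k : ℕ) : V (M.length + 1) →ₗ[R] V (M'.length + 1) :=
  rmap (fun a b => if a = b then uD M M' k a else 0)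

section MapLemmas

variable {M M' : List ℤ} {k : ℕ}

lemma fdiag_e (i : Fin (M.length + 1)) (j : Fin (M'.length + 1)) :
    fdiag M M' k (e i) j = if (i : ℕ) = (j : ℕ) then uD M M' k i else 0 := by
  rw [fdiag, rmap_e]

lemma fdiag_graded (h : Hyp M M' k) :
    GradedMap (fun i : Fin (M.length + 1) => stdGr M i)
      (fun j : Fin (M'.length + 1) => stdGr M' j) 0 (fdiag M M' k) := by
  intro i j mm hc
  rw [fdiag_e] at hc
  by_cases hij : (i : ℕ) = (j : ℕ)
  · rw [if_pos hij] at hc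
    show stdGr M' j - 2 * (mm : ℤ) = stdGr M i + 0
    rw [add_zero, ← hij]
    unfold uD at hc
    by_cases h1 : (i : ℕ) ≤ k
    · rw [if_pos h1] at hc
      have hmm : mm = 0 := by
        by_contra hne
        rw [Polynomial.coeff_one, if_neg (by omega)] at hc
        exact hc rfl
      rw [hmm, stdGr_congr h h1]
      ring
    · rw [if_neg h1] at hc
      by_cases h2 : (i : ℕ) = k + 1
      · rw [if_pos h2] at hc
        rw [h2]
        unfold wP at hc
        by_cases hk2 : k % 2 = 1
        · rw [if_pos hk2] at hc
          by_cases hbn : seqAt M k < 0 ∧ seqAt M' k < 0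
          · rw [if_pos hbn] at hc
            have hmm : mm = (seqAt M' k).natAbs - (seqAt M k).natAbs := by
              by_contra hne
              rw [Uu, Polynomial.coeff_X_pow, if_neg hne] at hc
              exact hc rfl
            have h5 := h.p5 hbn.1 hbn.2
            rw [hmm, stdGr_succ, stdGr_succ, if_pos hk2, if_pos hk2,
              stdGr_congr h (le_refl k), bstep_neg hbn.1, bstep_neg hbn.2]
            omega
          · rw [if_neg hbn] at hc
            by_cases hbp : 0 < seqAt M k ∧ 0 < seqAt M' k
            · rw [if_pos hbp] at hc
              have hmm : mm = (seqAt M k - seqAt M' k).toNat := by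
                by_contra hne
                rw [Uu, Polynomial.coeff_X_pow, if_neg hne] at hc
                exact hc rfl
              have h6 := h.p6 hbp.1 hbp.2
              rw [hmm, stdGr_succ, stdGr_succ, if_pos hk2, if_pos hk2,
                stdGr_congr h (le_refl k), bstep_pos hbp.1, bstep_pos hbp.2]
              omega
            · rw [if_neg hbp] at hc
              simp at hc
        · rw [if_neg hk2] at hc
          simp at hc
      · rw [if_neg h2] at hc
        simp at hc
  · rw [if_neg hij] at hc
    simp at hc

lemma fdiag_dvec (i : ℕ) (j : Fin (M'.length + 1)) :
    fdiag M M' k (fun j' : Fin (M.length + 1) => dCoef M i (j' : ℕ)) j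
      = if (j : ℕ) < M.length + 1 then dCoef M i j * uD M M' k j else 0 := by
  rw [fdiag, rmap_apply]
  simp only [mul_ite, mul_zero]
  exact sum_pick (fun s => dCoef M i s * uD M M' k s) j

lemma ofMatrix_fdiag (c : ℕ → ℕ → R) (i : Fin (M.length + 1)) (j : Fin (M'.length + 1)) :
    ofMatrix c (fdiag M M' k (e i)) j
      = if (i : ℕ) < M'.length + 1 then uD M M' k i * c i j else 0 := by
  rw [ofMatrix_apply]
  have hterm : ∀ i' : Fin (M'.length + 1),
      fdiag M M' k (e i) i' * c (i' : ℕ) (j : ℕ)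
      = if (i : ℕ) = (i' : ℕ) then uD M M' k i * c i' j else 0 := by
    intro i'
    rw [fdiag_e]
    by_cases hh : (i : ℕ) = (i' : ℕ)
    · rw [if_pos hh, if_pos hh]
    · rw [if_neg hh, if_neg hh, zero_mul]
  rw [Finset.sum_congr rfl (fun i' _ => hterm i')]
  exact sum_pick' (fun s => uD M M' k i * c s j) i

lemma fdiag_chain (h : Hyp M M' k) :
    fdiag M M' k ∘ₗ ofMatrix (dCoef M) = ofMatrix (dCoef M') ∘ₗ fdiag M M' k := by
  apply lmap_ext
  intro i
  funext j
  simp only [LinearMap.comp_apply]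
  have hv : ofMatrix (dCoef M) (e i) = fun j' : Fin (M.length + 1) => dCoef M i j' :=
    funext (ofMatrix_e (dCoef M) i)
  rw [hv, fdiag_dvec, ofMatrix_fdiag]
  split_ifs with g1 g2 g2
  · exact (key1 h i j).symm
  · rw [← key1 h i j, dCoef_rowbig M' (by omega), mul_zero]
  · rw [key1 h i j, dCoef_colbig M (by omega) (by omega), zero_mul]
  · rfl

lemma iCoef_diag (M : List ℤ) (i : ℕ) : iCoef M i i = 1 := by
  unfold iCoef; rw [if_pos rfl, wCoef_diag, add_zero]

lemma iCoef_off (M : List ℤ) {i j : ℕ} (hij : i ≠ j) : iCoef M i j = wCoef M i j := by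
  unfold iCoef; rw [if_neg hij, zero_add]

lemma key2' (h : Hyp M M' k) {i j : ℕ} (hi : i ≤ M.length) (hj : j ≤ M'.length) :
    ((if j < M.length + 1 then iCoef M i j * uD M M' k j else 0) +
     (if i < M'.length + 1 then uD M M' k i * iCoef M' i j else 0)).coeff 0 = 0 := by
  rw [Polynomial.coeff_add]
  by_cases hd : i = j
  · subst hd
    rw [if_pos (by omega), if_pos (by omega), iCoef_diag, iCoef_diag, one_mul, mul_one]
    exact F2_add_self _
  · rw [iCoef_off M hd, iCoef_off M' hd]
    have g1 : (if j < M.length + 1 then wCoef M i j * uD M M' k j else 0)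
        = wCoef M i j * uD M M' k j := by
      split_ifs with hg
      · rfl
      · rw [wCoef_colbig M hi (by omega), zero_mul]
    have g2 : (if i < M'.length + 1 then uD M M' k i * wCoef M' i j else 0)
        = uD M M' k i * wCoef M' i j := by
      split_ifs with hg
      · rfl
      · rw [wCoef_rowbig M' (by omega), mul_zero]
    rw [g1, g2, add_comm]
    exact key2 h i j

lemma fdiag_ivec (i : ℕ) (j : Fin (M'.length + 1)) :
    fdiag M M' k (fun j' : Fin (M.length + 1) => iCoef M i (j' : ℕ)) j
      = if (j : ℕ) < M.length + 1 then iCoef M i j * uD M M' k j else 0 := by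
  rw [fdiag, rmap_apply]
  simp only [mul_ite, mul_zero]
  exact sum_pick (fun s => iCoef M i s * uD M M' k s) j

lemma fdiag_homot (h : Hyp M M' k) :
    HomotopicModU (symCplx M).toPreCplx (symCplx M').toPreCplx
      (fdiag M M' k ∘ₗ ofMatrix (iCoef M)) (ofMatrix (iCoef M') ∘ₗ fdiag M M' k) := by
  refine ⟨0, ?_, ?_⟩
  · intro i j mm hc
    simp at hc
  · intro x
    rw [LinearMap.comp_zero, LinearMap.zero_comp, add_zero, add_zero]
    have hx : modU ((fdiag M M' k ∘ₗ ofMatrix (iCoef M)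
        + ofMatrix (iCoef M') ∘ₗ fdiag M M' k) x) := by
      apply modU_basis
      intro i j
      simp only [LinearMap.add_apply, LinearMap.comp_apply, Pi.add_apply]
      have hv : ofMatrix (iCoef M) (e i) = fun j' : Fin (M.length + 1) => iCoef M i j' :=
        funext (ofMatrix_e (iCoef M) i)
      rw [hv, fdiag_ivec, ofMatrix_fdiag]
      exact key2' h (by omega) (by omega)
    exact hx

end MapLemmas
section Torsion

lemma Upow_ne (n : ℕ) : (Uu : R) ^ n ≠ 0 :=
  pow_ne_zero n Polynomial.X_ne_zero

/-- extension of a vector to a function on `ℕ` -/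
def Xext (M : List ℤ) (x : V (M.length + 1)) : ℕ → R :=
  fun s => if h : s < M.length + 1 then x ⟨s, h⟩ else 0

/-- the primitive witnessing torsion -/
def yN (M : List ℤ) (K : ℕ) (x : V (M.length + 1)) : ℕ → R := fun s =>
  if s % 2 = 1 ∧ seqAt M s < 0 then
    Uu ^ (K - (seqAt M s).natAbs) * Xext M x (s + 1)
  else if s % 2 = 0 ∧ 0 < s ∧ 0 < seqAt M (s - 1) then
    Uu ^ (K - (seqAt M (s - 1)).natAbs) * Xext M x (s - 1)
  else 0

/-- In a standard complex, a cycle with trivial `T_0`-coordinate is `U`-power torsion. -/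
lemma tors (M : List ℤ) (hstd : StdParams M) (x : V (M.length + 1))
    (hc : ofMatrix (dCoef M) x = 0) (h0 : x ⟨0, Nat.succ_pos _⟩ = 0) :
    ∃ K y, ofMatrix (dCoef M) y = (Uu ^ K) • x := by
  have hm : M.length % 2 = 0 := hstd.1
  have hK : ∀ s : ℕ, (seqAt M s).natAbs ≤ (M.map Int.natAbs).sum := by
    intro s
    by_cases hs : s < M.length
    · have hmem : (seqAt M s).natAbs ∈ M.map Int.natAbs := by
        rw [seqAt, List.getD_eq_getElem _ _ hs]
        exact List.mem_map_of_mem (List.getElem_mem hs)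
      exact List.single_le_sum (fun _ _ => Nat.zero_le _) _ hmem
    · rw [seqAt_zero (by omega)]
      simp
  set K := (M.map Int.natAbs).sum with hKdef
  have hb_ne : ∀ s : ℕ, s % 2 = 1 → s < M.length → seqAt M s ≠ 0 := by
    intro s hs hlt
    have := hstd.2 s hlt
    rw [if_neg (by omega)] at this
    exact this
  have hcy : ∀ c : Fin (M.length + 1),
      (∑ i : Fin (M.length + 1), x i * dCoef M (i : ℕ) (c : ℕ)) = 0 :=
    fun c => congrFun hc c
  have hx1 : ∀ j : Fin (M.length + 1), (j : ℕ) % 2 = 1 → seqAt M (j : ℕ) < 0 → x j = 0 := by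
    intro j hj hneg
    have hjm : (j : ℕ) < M.length := seqAt_support (by omega)
    have hsum : (∑ i : Fin (M.length + 1), x i * dCoef M (i : ℕ) ((j : ℕ) + 1)) = 0 :=
      hcy ⟨(j : ℕ) + 1, by omega⟩
    rw [Finset.sum_eq_single j] at hsum
    · rw [dCoef_b1 M ⟨hj, hneg, rfl⟩] at hsum
      rcases mul_eq_zero.mp hsum with h1 | h1
      · exact h1
      · exact absurd h1 (Upow_ne _)
    · intro b _ hbne
      have hbv : (b : ℕ) ≠ (j : ℕ) := fun hh => hbne (Fin.ext hh)
      rw [dCoef_of_not M (fun hcc => by omega) (fun hcc => by omega), mul_zero]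
    · intro hmem; exact absurd (Finset.mem_univ _) hmem
  have hx2 : ∀ j : Fin (M.length + 1), (j : ℕ) % 2 = 0 → 0 < (j : ℕ) →
      0 < seqAt M ((j : ℕ) - 1) → x j = 0 := by
    intro j hj hpos hb
    have hsum : (∑ i : Fin (M.length + 1), x i * dCoef M (i : ℕ) ((j : ℕ) - 1)) = 0 :=
      hcy ⟨(j : ℕ) - 1, by omega⟩
    rw [Finset.sum_eq_single j] at hsum
    · rw [dCoef_b2 M ⟨hj, hpos, hb, by omega⟩] at hsum
      rcases mul_eq_zero.mp hsum with h1 | h1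
      · exact h1
      · exact absurd h1 (Upow_ne _)
    · intro b _ hbne
      have hbv : (b : ℕ) ≠ (j : ℕ) := fun hh => hbne (Fin.ext hh)
      rw [dCoef_of_not M (fun hcc => by omega) (fun hcc => by omega), mul_zero]
    · intro hmem; exact absurd (Finset.mem_univ _) hmem
  refine ⟨K, fun i => yN M K x (i : ℕ), ?_⟩
  funext j
  show (∑ i : Fin (M.length + 1), yN M K x (i : ℕ) * dCoef M (i : ℕ) (j : ℕ))
      = Uu ^ K * x j
  rcases Nat.eq_zero_or_pos (j : ℕ) with hj0 | hjpos
  · -- column 0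
    have hx0 : x j = 0 := by
      rw [show j = ⟨0, Nat.succ_pos _⟩ from Fin.ext hj0]
      exact h0
    rw [hx0, mul_zero]
    apply Finset.sum_eq_zero
    intro i _
    have hz : dCoef M (i : ℕ) (j : ℕ) = 0 := by
      rw [hj0]; exact dCoef_col0 M _
    rw [hz, mul_zero]
  · by_cases hj2 : (j : ℕ) % 2 = 1
    · -- odd column
      have hjm : (j : ℕ) < M.length := by omega
      have hbne := hb_ne (j : ℕ) hj2 hjm
      rcases lt_trichotomy (seqAt M (j : ℕ)) 0 with hb | hb | hb
      · -- b < 0 : zero = zero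
        rw [hx1 j hj2 hb, mul_zero]
        apply Finset.sum_eq_zero
        intro i _
        refine mul_eq_zero_of_right _ (dCoef_of_not M (fun hcc => by omega) (fun hcc => ?_))
        have hiv : (i : ℕ) - 1 = (j : ℕ) := by omega
        rw [hiv] at hcc
        omega
      · exact absurd hb hbne
      · -- b > 0 : single contribution from i = j + 1
        rw [Finset.sum_eq_single (⟨(j : ℕ) + 1, by omega⟩ : Fin (M.length + 1))]
        · have hmain : yN M K x ((j : ℕ) + 1) * dCoef M ((j : ℕ) + 1) (j : ℕ)
              = Uu ^ K * x j := by
            rw [dCoef_b2 M ⟨by omega, by omega, by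
              simpa only [Nat.add_sub_cancel] using hb, rfl⟩]
            unfold yN
            rw [if_neg (by omega), if_pos ⟨by omega, by omega, by
              simpa only [Nat.add_sub_cancel] using hb⟩]
            simp only [Nat.add_sub_cancel]
            unfold Xext
            rw [dif_pos (by omega : (j : ℕ) < M.length + 1)]
            have hxj : (⟨(j : ℕ), by omega⟩ : Fin (M.length + 1)) = j := Fin.ext rfl
            rw [hxj, mul_assoc, mul_comm (x j), ← mul_assoc, ← pow_add]
            congr 2
            have := hK (j : ℕ)
            omega
          exact hmain
        · intro b _ hbne'
          have hbv : (b : ℕ) ≠ (j : ℕ) + 1 := fun hh => hbne' (Fin.ext hh)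
          rw [dCoef_of_not M (fun hcc => by omega) (fun hcc => by omega), mul_zero]
        · intro hmem; exact absurd (Finset.mem_univ _) hmem
    · -- even column (positive)
      have hjm1 : (j : ℕ) - 1 < M.length := by omega
      have hbne := hb_ne ((j : ℕ) - 1) (by omega) hjm1
      rcases lt_trichotomy (seqAt M ((j : ℕ) - 1)) 0 with hb | hb | hb
      · -- b < 0 : single contribution from i = j - 1
        rw [Finset.sum_eq_single (⟨(j : ℕ) - 1, by omega⟩ : Fin (M.length + 1))]
        · have hmain : yN M K x ((j : ℕ) - 1) * dCoef M ((j : ℕ) - 1) (j : ℕ)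
              = Uu ^ K * x j := by
            rw [dCoef_b1 M ⟨by omega, hb, by omega⟩]
            unfold yN
            rw [if_pos ⟨by omega, hb⟩]
            unfold Xext
            rw [dif_pos (by omega : (j : ℕ) - 1 + 1 < M.length + 1)]
            have hxj : (⟨(j : ℕ) - 1 + 1, by omega⟩ : Fin (M.length + 1)) = j :=
              Fin.ext (show (j : ℕ) - 1 + 1 = (j : ℕ) by omega)
            rw [hxj, mul_assoc, mul_comm (x j), ← mul_assoc, ← pow_add]
            congr 2
            have := hK ((j : ℕ) - 1)
            omega
          exact hmain
        · intro b _ hbne'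
          have hbv : (b : ℕ) ≠ (j : ℕ) - 1 := fun hh => hbne' (Fin.ext hh)
          rw [dCoef_of_not M (fun hcc => by omega) (fun hcc => by omega), mul_zero]
        · intro hmem; exact absurd (Finset.mem_univ _) hmem
      · exact absurd hb hbne
      · -- b > 0 : zero = zero
        rw [hx2 j (by omega) hjpos hb, mul_zero]
        apply Finset.sum_eq_zero
        intro i _
        refine mul_eq_zero_of_right _ (dCoef_of_not M (fun hcc => ?_) (fun hcc => by omega))
        have hiv : (i : ℕ) = (j : ℕ) - 1 := by omega
        rw [hiv] at hcc
        omega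

end Torsion
section Assemble

variable {M M' : List ℤ} {k : ℕ}

lemma fdiag_local (h : Hyp M M' k) (hstd : StdParams M) :
    isLocalMap (symCplx M) (symCplx M') (fdiag M M' k) := by
  refine ⟨⟨fdiag_graded h, fdiag_chain h, fdiag_homot h⟩, ?_⟩
  intro x hx
  obtain ⟨hcyc, hnb⟩ := hx
  constructor
  · show ofMatrix (dCoef M') (fdiag M M' k x) = 0
    have hcomm : fdiag M M' k (ofMatrix (dCoef M) x)
        = ofMatrix (dCoef M') (fdiag M M' k x) := LinearMap.congr_fun (fdiag_chain h) x
    have h4 : fdiag M M' k ((symCplx M).toPreCplx.d x) = 0 := by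
      rw [hcyc]; exact map_zero _
    exact hcomm.symm.trans h4
  · intro K hbd
    obtain ⟨y, hy⟩ := hbd
    have h2 : ofMatrix (dCoef M') y ⟨0, Nat.succ_pos _⟩ = 0 := by
      rw [ofMatrix_apply]
      apply Finset.sum_eq_zero
      intro i _
      rw [show ((⟨0, Nat.succ_pos _⟩ : Fin (M'.length + 1)) : ℕ) = 0 from rfl,
        dCoef_col0, mul_zero]
    have h3 : Uu ^ K * (fdiag M M' k x ⟨0, Nat.succ_pos _⟩)
        = ofMatrix (dCoef M') y ⟨0, Nat.succ_pos _⟩ :=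
      (congrFun hy (⟨0, Nat.succ_pos _⟩ : Fin (M'.length + 1))).symm
    rw [h2] at h3
    have hf0 : fdiag M M' k x ⟨0, Nat.succ_pos _⟩ = 0 := by
      rcases mul_eq_zero.mp h3 with h' | h'
      · exact absurd h' (Upow_ne K)
      · exact h'
    have hcalc : fdiag M M' k x ⟨0, Nat.succ_pos _⟩
        = x ⟨0, Nat.succ_pos _⟩ * uD M M' k 0 := by
      show (∑ i : Fin (M.length + 1),
        x i * (if (i : ℕ) = 0 then uD M M' k (i : ℕ) else 0)) = _
      rw [Finset.sum_eq_single (⟨0, Nat.succ_pos _⟩ : Fin (M.length + 1))]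
      · rw [if_pos (rfl : ((⟨0, Nat.succ_pos _⟩ : Fin (M.length + 1)) : ℕ) = 0)]; rfl
      · intro b _ hbne
        have hbv : (b : ℕ) ≠ 0 := fun hh => hbne (Fin.ext hh)
        rw [if_neg hbv, mul_zero]
      · intro hmem; exact absurd (Finset.mem_univ _) hmem
    rw [hcalc, uD_one (Nat.zero_le k), mul_one] at hf0
    obtain ⟨K', y', hy'⟩ := tors M hstd x hcyc hf0
    exact hnb K' ⟨y', hy'⟩

lemma ltB_hyp (hpre : ∀ i < k, seqAt M i = seqAt M' i)
    (hlt : ltB (seqAt M k) (seqAt M' k)) : Hyp M M' k := by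
  refine ⟨hpre, ?_, ?_, ?_, ?_, ?_, ?_⟩ <;>
    (rcases hlt with ⟨u1, u2⟩ | ⟨u1, u2⟩ | ⟨u1, u2, u3⟩ | ⟨u1, u2, u3⟩ <;> omega)

lemma eq_hyp (hM : StdParams M) (hM' : StdParams M') (heq : ∀ i, seqAt M i = seqAt M' i) :
    Hyp M M' (M.length + 1) := by
  have hme := hM.1
  have hz : seqAt M (M.length + 1) = 0 := seqAt_zero (by omega)
  have hz' : seqAt M' (M.length + 1) = 0 := by
    by_cases hl : M'.length ≤ M.length + 1
    · exact seqAt_zero hl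
    · exfalso
      have h1 := hM'.2 M.length (by omega)
      rw [if_pos (by omega)] at h1
      have h2 : seqAt M' M.length = 0 := by
        rw [← heq]; exact seqAt_zero le_rfl
      rcases h1 with h1 | h1 <;> omega
  exact ⟨fun i _ => heq i, by omega, by omega, by omega, by omega, by omega, by omega⟩

end Assemble

/-- if the parameter sequences satisfy `(a_i,b_i) ≤ (a_i',b_i')`
in the lexicographic order, then there is a local map between the
corresponding standard complexes. -/
theorem lexLe_local_map (M M' : List ℤ) (hM : StdParams M) (hM' : StdParams M')
    (h : lexLe M M') :
    ∃ f, isLocalMap (symCplx M) (symCplx M') f := by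
  rcases h with ⟨k, hpre, hlt⟩ | heq
  · exact ⟨fdiag M M' k, fdiag_local (ltB_hyp hpre hlt) hM⟩
  · exact ⟨fdiag M M' (M.length + 1), fdiag_local (eq_hyp hM hM' heq) hM⟩

end AI
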